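/- Let f ∈ ℝ[x₁,…,xₙ] be a circuit polynomial with r = n satisfying condition (C3). Then f is gem regular, i.e., no exponent vector of f lies in Vᶜ(f) ∩ G for a nonempty face G of New∞(f) with 0 ∉ G. -/

import Mathlib

open MvPolynomial Filter

noncomputable section

open scoped Classical

/-- The embedding of exponent vectors into `ℝⁿ`. -/
def expEmbed {n : ℕ} (α : Fin n →₀ ℕ) : Fin n → ℝ := fun i => (α i : ℝ)

/-- The Newton polytope at infinity `New∞(f) = conv(A(f) ∪ {0})`. -/
def newtonInfty {n : ℕ} (f : MvPolynomial (Fin n) ℝ) : Set (Fin n → ℝ) :=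
  convexHull ℝ (expEmbed '' ((insert 0 f.support : Finset (Fin n →₀ ℕ)) : Set (Fin n →₀ ℕ)))

/-- The vertex set `V₀(f)` of the Newton polytope at infinity, as a
finset of exponent vectors. -/
def V0 {n : ℕ} (f : MvPolynomial (Fin n) ℝ) : Finset (Fin n →₀ ℕ) :=
  (insert 0 f.support).filter fun α => expEmbed α ∈ Set.extremePoints ℝ (newtonInfty f)

/-- The set `V(f) = V₀(f) \ {0}` of vertices at infinity. -/
def Vinf {n : ℕ} (f : MvPolynomial (Fin n) ℝ) : Finset (Fin n →₀ ℕ) := (V0 f).erase 0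

/-- An exponent vector with all entries even, i.e. a member of `(2ℕ₀)ⁿ`. -/
def IsEvenExp {n : ℕ} (α : Fin n →₀ ℕ) : Prop := ∀ i, Even (α i)

/-- Condition (C1): `V(f) ⊆ (2ℕ₀)ⁿ`. -/
def CondC1 {n : ℕ} (f : MvPolynomial (Fin n) ℝ) : Prop := ∀ α ∈ Vinf f, IsEvenExp α

/-- Condition (C2): positive coefficients at all vertices at infinity. -/
def CondC2 {n : ℕ} (f : MvPolynomial (Fin n) ℝ) : Prop := ∀ α ∈ Vinf f, 0 < f.coeff α

/-- Condition (C3): `V(f)` contains a vector `2 kᵢ eᵢ` for every `i`. -/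
def CondC3 {n : ℕ} (f : MvPolynomial (Fin n) ℝ) : Prop :=
  ∀ i : Fin n, ∃ k : ℕ, 0 < k ∧ Finsupp.single i (2 * k) ∈ Vinf f

/-- An exponent vector of `f` is gem degenerate if it is no vertex at infinity but lies in
some nonempty face of `New∞(f)` not containing the origin. -/
def IsGemDegenerate {n : ℕ} (f : MvPolynomial (Fin n) ℝ) (α : Fin n →₀ ℕ) : Prop :=
  α ∈ f.support ∧ α ∉ Vinf f ∧
    ∃ G : Set (Fin n → ℝ), G.Nonempty ∧ IsExtreme ℝ (newtonInfty f) G ∧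
      (0 : Fin n → ℝ) ∉ G ∧ expEmbed α ∈ G

/-- The set `D(f)` of gem degenerate exponent vectors of `f`. -/
def Dfin {n : ℕ} (f : MvPolynomial (Fin n) ℝ) : Finset (Fin n →₀ ℕ) :=
  f.support.filter fun α => IsGemDegenerate f α

/-- `f` is gem regular if `D(f) = ∅`. -/
def GemRegular {n : ℕ} (f : MvPolynomial (Fin n) ℝ) : Prop := ∀ α, ¬ IsGemDegenerate f α

/-- `V₀ᶜ(f) = A(f) \ V₀(f)`. -/
def V0c {n : ℕ} (f : MvPolynomial (Fin n) ℝ) : Finset (Fin n →₀ ℕ) := f.support \ V0 f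

/-- A map of minimal barycentric coordinates of `f`. -/
def IsMinBary {n : ℕ} (f : MvPolynomial (Fin n) ℝ)
    (lam : (Fin n →₀ ℕ) → (Fin n →₀ ℕ) → ℝ) : Prop :=
  (∀ αs α, 0 ≤ lam αs α ∧ lam αs α ≤ 1) ∧
  ∀ αs ∈ V0c f, ∃ W : Finset (Fin n →₀ ℕ), W ⊆ V0 f ∧
    AffineIndependent ℝ (fun w : W => expEmbed (w : Fin n →₀ ℕ)) ∧
    (∀ α ∈ W, 0 < lam αs α) ∧
    (∀ α ∈ V0 f, α ∉ W → lam αs α = 0) ∧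
    (∑ α ∈ W, lam αs α) = 1 ∧
    (∑ α ∈ W, lam αs α • expEmbed α) = expEmbed αs

/-- `W_{α*}(λ_f)`, the minimal vertex representation of `α*` corresponding to `λ_f`. -/
def Wfin {n : ℕ} (f : MvPolynomial (Fin n) ℝ)
    (lam : (Fin n →₀ ℕ) → (Fin n →₀ ℕ) → ℝ) (αs : Fin n →₀ ℕ) : Finset (Fin n →₀ ℕ) :=
  (V0 f).filter fun α => 0 < lam αs α

/-- The circuit number `Θ(f, λ_f, α*)`. -/
def circuitNumber {n : ℕ} (f : MvPolynomial (Fin n) ℝ)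
    (lam : (Fin n →₀ ℕ) → (Fin n →₀ ℕ) → ℝ) (αs : Fin n →₀ ℕ) : ℝ :=
  ∏ α ∈ Wfin f lam αs, (f.coeff α / lam αs α) ^ (lam αs α)

/-- `g` is coercive on `ℝⁿ`: `g(x) → +∞` whenever `‖x‖ → +∞`. -/
def Coercive {n : ℕ} (g : (Fin n → ℝ) → ℝ) : Prop :=
  Tendsto g (comap (fun x : Fin n → ℝ => ‖x‖) atTop) atTop


/-- The polynomial `Σ_{j=0}^r c_j x^{α(j)} + c* x^{α*}`. -/
noncomputable def circuitPoly {n r : ℕ} (α : Fin (r + 1) → (Fin n →₀ ℕ)) (c : Fin (r + 1) → ℝ)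
    (αs : Fin n →₀ ℕ) (cs : ℝ) : MvPolynomial (Fin n) ℝ :=
  (∑ j, MvPolynomial.monomial (α j) (c j)) + MvPolynomial.monomial αs cs

/-- The data `(α, c, α*, c*, λ)` describes a circuit polynomial
`f = Σ_{j=0}^r c_j x^{α(j)} + c* x^{α*}` with `r ≤ n`. -/
def IsCircuit {n r : ℕ} (α : Fin (r + 1) → (Fin n →₀ ℕ)) (c : Fin (r + 1) → ℝ)
    (αs : Fin n →₀ ℕ) (cs : ℝ) (lam : Fin (r + 1) → ℝ) : Prop :=
  r ≤ n ∧
  αs ∉ Set.range α ∧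
  (∀ j, IsEvenExp (α j)) ∧
  (∀ j, 0 < c j) ∧
  Set.extremePoints ℝ
      (convexHull ℝ (expEmbed '' ((circuitPoly α c αs cs).support : Set (Fin n →₀ ℕ))))
    = expEmbed '' Set.range α ∧
  AffineIndependent ℝ (fun j => expEmbed (α j)) ∧
  (∀ j, 0 < lam j) ∧ (∑ j, lam j) = 1 ∧ (∑ j, lam j • expEmbed (α j)) = expEmbed αs

/-- The circuit number `Θ = Π_{j=0}^r (c_j / λ_j)^{λ_j}` of a circuit polynomial. -/
noncomputable def circuitTheta {r : ℕ} (c : Fin (r + 1) → ℝ) (lam : Fin (r + 1) → ℝ) : ℝ :=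
  ∏ j, (c j / lam j) ^ (lam j)

/-- Auxiliary: `expEmbed` of the zero exponent is the origin. -/
lemma expEmbed_zero {n : ℕ} : expEmbed (0 : Fin n →₀ ℕ) = (0 : Fin n → ℝ) := by
  funext i; simp [expEmbed]

/-- Auxiliary: `expEmbed` is injective. -/
lemma expEmbed_injective {n : ℕ} : Function.Injective (expEmbed (n := n)) := by
  intro a b hab
  ext i
  exact Nat.cast_injective (congrFun hab i)

/-- Auxiliary: an extreme subset of a convex set absorbs all points appearing with positive
weight in a convex combination lying in it. -/
lemma extreme_mem_of_combo {E : Type*} [AddCommGroup E] [Module ℝ E] {A G : Set E}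
    (hA : Convex ℝ A) (hG : IsExtreme ℝ A G) {ι : Type*} [DecidableEq ι] (T : Finset ι)
    (p : ι → E) :
    ∀ w : ι → ℝ, (∀ i ∈ T, p i ∈ A) → (∀ i ∈ T, 0 < w i) → (∑ i ∈ T, w i) = 1 →
      (∑ i ∈ T, w i • p i) ∈ G → ∀ i ∈ T, p i ∈ G := by
  induction T using Finset.induction_on with
  | empty => intro w _ _ _ _ i hi; exact absurd hi (Finset.notMem_empty i)
  | @insert t T ht ih =>
    intro w hp hw hw1 hx i hi
    rw [Finset.sum_insert ht] at hx hw1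
    have hwt : 0 < w t := hw t (Finset.mem_insert_self t T)
    rcases T.eq_empty_or_nonempty with rfl | hTne
    · simp only [Finset.sum_empty, add_zero] at hx hw1
      rw [hw1, one_smul] at hx
      rcases Finset.mem_insert.mp hi with rfl | hi'
      · exact hx
      · exact absurd hi' (Finset.notMem_empty i)
    · have hspos : 0 < ∑ i ∈ T, w i :=
        Finset.sum_pos (fun i hi => hw i (Finset.mem_insert_of_mem hi)) hTne
      have hyA : (∑ i ∈ T, (w i / (∑ i ∈ T, w i)) • p i) ∈ A :=
        hA.sum_mem (fun i hi => div_nonneg (hw i (Finset.mem_insert_of_mem hi)).le hspos.le)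
          (by rw [← Finset.sum_div, div_self hspos.ne'])
          (fun i hi => hp i (Finset.mem_insert_of_mem hi))
      have hsy : (∑ i ∈ T, w i) • ∑ i ∈ T, (w i / (∑ i ∈ T, w i)) • p i
          = ∑ i ∈ T, w i • p i := by
        rw [Finset.smul_sum]
        refine Finset.sum_congr rfl fun i _ => ?_
        rw [smul_smul]
        congr 1
        field_simp
      have hseg : (w t • p t + ∑ i ∈ T, w i • p i)
          ∈ openSegment ℝ (p t) (∑ i ∈ T, (w i / (∑ i ∈ T, w i)) • p i) :=
        ⟨w t, ∑ i ∈ T, w i, hwt, hspos, hw1, by rw [hsy]⟩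
      obtain ⟨hptG, hyG⟩ := And.intro (hG.2 (hp t (Finset.mem_insert_self t T)) hyA hx hseg)
        (hG.right_mem_of_mem_openSegment (hp t (Finset.mem_insert_self t T)) hyA hx hseg)
      rcases Finset.mem_insert.mp hi with rfl | hi'
      · exact hptG
      · exact ih (fun k => w k / (∑ i ∈ T, w i))
          (fun k hk => hp k (Finset.mem_insert_of_mem hk))
          (fun k hk => div_pos (hw k (Finset.mem_insert_of_mem hk)) hspos)
          (by rw [← Finset.sum_div, div_self hspos.ne']) hyG i hi'

/-- Auxiliary: a convex combination with full weight at one index equals that point. -/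
lemma combo_eq_of_weight_one {E : Type*} [AddCommGroup E] [Module ℝ E] {ι : Type*} [Fintype ι]
    [DecidableEq ι] (θ : ι → ℝ) (p : ι → E) (h0 : ∀ o, 0 ≤ θ o) (h1 : ∑ o, θ o = 1)
    {j : ι} (hj : θ j = 1) : ∑ o, θ o • p o = p j := by
  have hadd := Finset.add_sum_erase Finset.univ θ (Finset.mem_univ j)
  rw [h1, hj] at hadd
  have herase : ∑ o ∈ Finset.univ.erase j, θ o = 0 := by linarith
  have hz : ∀ o, o ≠ j → θ o = 0 := fun o ho =>
    (Finset.sum_eq_zero_iff_of_nonneg (fun i _ => h0 i)).mp herase o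
      (Finset.mem_erase.mpr ⟨ho, Finset.mem_univ o⟩)
  rw [Finset.sum_eq_single j (fun o _ ho => by rw [hz o ho, zero_smul])
    (fun h => absurd (Finset.mem_univ j) h), hj, one_smul]


/-- a circuit polynomial with `r = n` satisfying (C3) is gem regular. -/
theorem stmt13 {n r : ℕ} (α : Fin (r + 1) → (Fin n →₀ ℕ)) (c : Fin (r + 1) → ℝ)
    (αs : Fin n →₀ ℕ) (cs : ℝ) (lam : Fin (r + 1) → ℝ)
    (hcirc : IsCircuit α c αs cs lam) (hr : r = n)
    (hC3 : CondC3 (circuitPoly α c αs cs)) :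
    GemRegular (circuitPoly α c αs cs) := by
  obtain ⟨-, hαs, -, hc, -, haff, hlam, hlam1, hlamsum⟩ := hcirc
  clear hC3
  set f := circuitPoly α c αs cs with hf
  intro β hβ
  obtain ⟨hβsupp, hβV, G, -, hGext, h0G, hβG⟩ := hβ
  -- basic facts about the support
  have hαinj : Function.Injective α := by
    intro a b hab
    exact haff.injective (by simp only [hab])
  have hcoeff : ∀ γ, f.coeff γ
      = (∑ j, if α j = γ then c j else 0) + (if αs = γ then cs else 0) := by
    intro γ
    simp [hf, circuitPoly, MvPolynomial.coeff_sum, MvPolynomial.coeff_monomial]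
  have hsuppα : ∀ j, α j ∈ f.support := by
    intro j
    rw [MvPolynomial.mem_support_iff, hcoeff]
    have h1 : (∑ k, if α k = α j then c k else 0) = c j := by
      rw [Finset.sum_eq_single j (fun k _ hk => if_neg (fun h => hk (hαinj h)))
        (fun h => absurd (Finset.mem_univ j) h), if_pos rfl]
    rw [h1, if_neg (fun h => hαs ⟨j, h.symm⟩)]
    simpa using (hc j).ne'
  have hsuppsub : ∀ γ ∈ f.support, (∃ j, γ = α j) ∨ γ = αs := by
    intro γ hγ
    by_contra hcon
    push_neg at hcon
    apply MvPolynomial.mem_support_iff.mp hγ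
    rw [hcoeff, if_neg (fun h => hcon.2 h.symm), add_zero]
    exact Finset.sum_eq_zero fun k _ => if_neg (fun h => hcon.1 k h.symm)
  -- membership facts in the Newton polytope at infinity
  have hA : Convex ℝ (newtonInfty f) := convex_convexHull ℝ _
  have h0A : (0 : Fin n → ℝ) ∈ newtonInfty f := by
    apply subset_convexHull ℝ _
    exact ⟨0, by simp, expEmbed_zero⟩
  have heA : ∀ j, expEmbed (α j) ∈ newtonInfty f := by
    intro j
    apply subset_convexHull ℝ _
    exact ⟨α j, by simp [hsuppα j], rfl⟩
  -- the indexed generating family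
  set v : Option (Fin (r + 1)) → (Fin n → ℝ) :=
    fun o => Option.elim o 0 (fun k => expEmbed (α k)) with hv
  have hvA : ∀ o, v o ∈ newtonInfty f := by
    intro o
    cases o with
    | none => exact h0A
    | some k => exact heA k
  have hsubQ : newtonInfty f ⊆ convexHull ℝ (Set.range v) := by
    refine convexHull_min ?_ (convex_convexHull ℝ _)
    rintro x ⟨γ, hγ, rfl⟩
    simp only [Finset.coe_insert, Set.mem_insert_iff, Finset.mem_coe] at hγ
    rcases hγ with rfl | hγ
    · exact subset_convexHull ℝ _ ⟨none, expEmbed_zero.symm ▸ rfl⟩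
    · rcases hsuppsub γ hγ with ⟨j, rfl⟩ | rfl
      · exact subset_convexHull ℝ _ ⟨some j, rfl⟩
      · rw [← hlamsum]
        exact (convex_convexHull ℝ _).sum_mem (fun j _ => (hlam j).le) hlam1
          (fun j _ => subset_convexHull ℝ _ ⟨some j, rfl⟩)
  have hrep : ∀ x ∈ newtonInfty f, ∃ θ : Option (Fin (r + 1)) → ℝ,
      (∀ o, 0 ≤ θ o) ∧ (∑ o, θ o) = 1 ∧ (∑ o, θ o • v o) = x := by
    intro x hx
    have hx' := hsubQ hx
    rw [convexHull_range_eq_exists_affineCombination] at hx'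
    obtain ⟨s, w, hw0, hw1, hws⟩ := hx'
    have hnn : ∀ o, 0 ≤ (if o ∈ s then w o else 0) := by
      intro o
      by_cases h : o ∈ s
      · simp only [h, if_true]; exact hw0 o h
      · simp [h]
    refine ⟨fun o => if o ∈ s then w o else 0, hnn, ?_, ?_⟩
    · rw [Finset.sum_ite_mem, Finset.univ_inter, hw1]
    · have hterm : ∀ o, (if o ∈ s then w o else 0) • v o
          = if o ∈ s then w o • v o else 0 := fun o => by split_ifs <;> simp
      calc (∑ o, (if o ∈ s then w o else 0) • v o)
          = ∑ o, if o ∈ s then w o • v o else 0 := by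
            exact Finset.sum_congr rfl fun o _ => hterm o
        _ = ∑ o ∈ s, w o • v o := by rw [Finset.sum_ite_mem, Finset.univ_inter]
        _ = x := by rw [← Finset.affineCombination_eq_linear_combination s v w hw1, hws]
  -- case analysis on the degenerate exponent
  rcases hsuppsub β hβsupp with ⟨j, rfl⟩ | hβαs
  · -- case β = α j
    by_cases hj0 : expEmbed (α j) = 0
    · exact h0G (hj0 ▸ hβG)
    have hnotext : expEmbed (α j) ∉ Set.extremePoints ℝ (newtonInfty f) := by
      intro hext'
      apply hβV
      refine Finset.mem_erase.mpr ⟨?_, Finset.mem_filter.mpr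
        ⟨Finset.mem_insert_of_mem hβsupp, hext'⟩⟩
      intro h
      exact hj0 (by rw [h, expEmbed_zero])
    have hEx : ∃ x1, x1 ∈ newtonInfty f ∧ ∃ x2, x2 ∈ newtonInfty f ∧
        (expEmbed (α j) ∈ openSegment ℝ x1 x2 ∧ ¬(x1 = expEmbed (α j) ∧ x2 = expEmbed (α j))) := by
      by_contra hcon
      push_neg at hcon
      exact hnotext (mem_extremePoints.mpr ⟨heA j, fun x1 h1 x2 h2 hs => hcon x1 h1 x2 h2 hs⟩)
    obtain ⟨x1, hx1A, x2, hx2A, hsegx, hnex⟩ := hEx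
    obtain ⟨θ1, hθ10, hθ11, hθ1x⟩ := hrep x1 hx1A
    obtain ⟨θ2, hθ20, hθ21, hθ2x⟩ := hrep x2 hx2A
    obtain ⟨a, b, ha, hb, hab, habx⟩ := hsegx
    set θ : Option (Fin (r + 1)) → ℝ := fun o => a * θ1 o + b * θ2 o with hθdef
    have hθ0 : ∀ o, 0 ≤ θ o := fun o =>
      add_nonneg (mul_nonneg ha.le (hθ10 o)) (mul_nonneg hb.le (hθ20 o))
    have hθ1 : ∑ o, θ o = 1 := by
      simp only [hθdef, Finset.sum_add_distrib, ← Finset.mul_sum, hθ11, hθ21, mul_one, hab]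
    have hθx : ∑ o, θ o • v o = expEmbed (α j) := by
      simp only [hθdef, add_smul, mul_smul, Finset.sum_add_distrib, ← Finset.smul_sum,
        hθ1x, hθ2x]
      exact habx
    have hle1 : ∀ (θ' : Option (Fin (r + 1)) → ℝ), (∀ o, 0 ≤ θ' o) → (∑ o, θ' o) = 1 →
        ∀ o, θ' o ≤ 1 := by
      intro θ' h0 h1 o
      rw [← h1]
      exact Finset.single_le_sum (fun i _ => h0 i) (Finset.mem_univ o)
    have hθjlt : θ (some j) < 1 := by
      rcases lt_or_eq_of_le (hle1 θ hθ0 hθ1 (some j)) with h | h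
      · exact h
      · exfalso
        have h1eq : a * θ1 (some j) + b * θ2 (some j) = 1 := h
        have hsum0 : a * (1 - θ1 (some j)) + b * (1 - θ2 (some j)) = 0 := by
          linear_combination hab - h1eq
        have hA1 : 0 ≤ a * (1 - θ1 (some j)) :=
          mul_nonneg ha.le (sub_nonneg.mpr (hle1 θ1 hθ10 hθ11 (some j)))
        have hA2 : 0 ≤ b * (1 - θ2 (some j)) :=
          mul_nonneg hb.le (sub_nonneg.mpr (hle1 θ2 hθ20 hθ21 (some j)))
        have h11 : θ1 (some j) = 1 := by
          have : a * (1 - θ1 (some j)) = 0 := by linarith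
          rcases mul_eq_zero.mp this with h' | h'
          · exact absurd h' ha.ne'
          · linarith
        have h21 : θ2 (some j) = 1 := by
          have : b * (1 - θ2 (some j)) = 0 := by linarith
          rcases mul_eq_zero.mp this with h' | h'
          · exact absurd h' hb.ne'
          · linarith
        exact hnex ⟨by rw [← hθ1x, combo_eq_of_weight_one θ1 v hθ10 hθ11 h11]; rfl,
          by rw [← hθ2x, combo_eq_of_weight_one θ2 v hθ20 hθ21 h21]; rfl⟩
        
    by_cases hθn : 0 < θ none
    · -- positive weight at the origin: extremeness forces 0 ∈ G
      set T : Finset (Option (Fin (r + 1))) := Finset.univ.filter (fun o => 0 < θ o) with hT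
      have hTsum : ∑ o ∈ T, θ o = 1 := by
        rw [hT, Finset.sum_filter_of_ne (fun o _ ho => (hθ0 o).lt_of_ne' ho), hθ1]
      have hTvec : ∑ o ∈ T, θ o • v o = expEmbed (α j) := by
        rw [hT, Finset.sum_filter_of_ne, hθx]
        intro o _ ho
        rcases (hθ0 o).lt_or_eq with h | h
        · exact h
        · exact absurd (by rw [← h, zero_smul]) ho
      have hprop := extreme_mem_of_combo hA hGext T v θ (fun o _ => hvA o)
        (fun o ho => (Finset.mem_filter.mp ho).2) hTsum (by rw [hTvec]; exact hβG)
        none (Finset.mem_filter.mpr ⟨Finset.mem_univ _, hθn⟩)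
      exact h0G hprop
    · -- zero weight at the origin: contradiction with affine independence
      have hθn0 : θ none = 0 := le_antisymm (not_lt.mp hθn) (hθ0 none)
      have hsum_some : θ none + ∑ k, θ (some k) = 1 := by
        rw [← Fintype.sum_option]; exact hθ1
      have hsum1 : ∑ k, θ (some k) = 1 := by rw [hθn0, zero_add] at hsum_some; exact hsum_some
      have hxe : ∑ k, θ (some k) • expEmbed (α k) = expEmbed (α j) := by
        have := hθx
        rw [Fintype.sum_option] at this
        simpa [hv, hθn0] using this
      set u : Fin (r + 1) → ℝ := fun k => θ (some k) - (if k = j then 1 else 0) with hu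
      have hu0 : ∑ k, u k = 0 := by
        simp only [hu, Finset.sum_sub_distrib, hsum1, Finset.sum_ite_eq' Finset.univ j
          (fun _ => (1 : ℝ)), Finset.mem_univ, if_pos]
        ring
      have huv : ∑ k, u k • expEmbed (α k) = 0 := by
        simp only [hu, sub_smul, Finset.sum_sub_distrib, hxe, ite_smul, one_smul, zero_smul,
          Finset.sum_ite_eq' Finset.univ j (fun k => expEmbed (α k)), Finset.mem_univ, if_pos]
        abel
      have huj := affineIndependent_iff.mp haff Finset.univ u hu0 huv j (Finset.mem_univ j)
      rw [hu] at huj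
      norm_num at huj
      linarith
  · -- case β = αs : stretch along the ray from the origin through αs
    rw [hβαs] at hβG
    have hspan : affineSpan ℝ (Set.range fun j => expEmbed (α j)) = ⊤ := by
      rw [haff.affineSpan_eq_top_iff_card_eq_finrank_add_one]
      simp [hr, Module.finrank_fin_fun]
    have h0span : (0 : Fin n → ℝ) ∈ affineSpan ℝ (Set.range fun j => expEmbed (α j)) := by
      rw [hspan]; trivial
    obtain ⟨μ, hμ1, hμe⟩ := eq_affineCombination_of_mem_affineSpan_of_fintype h0span
    rw [Finset.affineCombination_eq_linear_combination _ _ _ hμ1] at hμe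
    have hμ0 : ∑ k, μ k • expEmbed (α k) = 0 := hμe.symm
    -- choose a small positive stretching parameter t
    have hne : (Finset.univ : Finset (Fin (r + 1))).Nonempty := Finset.univ_nonempty
    set m : ℝ := Finset.univ.inf' hne lam with hm
    have hmpos : 0 < m := by
      rw [hm, Finset.lt_inf'_iff]
      exact fun j _ => hlam j
    have hmle : ∀ j, m ≤ lam j := fun j => Finset.inf'_le _ (Finset.mem_univ j)
    set B : ℝ := Finset.univ.sup' hne (fun j => μ j - lam j) with hB
    have hBle : ∀ j, μ j - lam j ≤ B := by
      intro j
      rw [hB]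
      exact Finset.le_sup' (fun k => μ k - lam k) (Finset.mem_univ j)
    set M : ℝ := max B 0 with hM
    have hM0 : 0 ≤ M := le_max_right B 0
    set t : ℝ := m / (M + 1) with ht
    have htpos : 0 < t := div_pos hmpos (by linarith)
    have htM : t * (M + 1) = m := div_mul_cancel₀ m (by linarith)
    have htm : t * M < m := by nlinarith
    have hcj : ∀ j, 0 < (1 + t) * lam j - t * μ j := by
      intro j
      have h1 : t * (μ j - lam j) ≤ t * M :=
        mul_le_mul_of_nonneg_left (le_trans (hBle j) (le_max_left B 0)) htpos.le
      have h2 := hmle j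
      nlinarith
    have hcsum : ∑ j, ((1 + t) * lam j - t * μ j) = 1 := by
      rw [Finset.sum_sub_distrib, ← Finset.mul_sum, ← Finset.mul_sum, hlam1, hμ1]
      ring
    have hyA : (∑ j, ((1 + t) * lam j - t * μ j) • expEmbed (α j)) ∈ newtonInfty f :=
      hA.sum_mem (fun j _ => (hcj j).le) hcsum (fun j _ => heA j)
    have h1t : (0 : ℝ) < 1 + t := by linarith
    have hseg : expEmbed αs ∈ openSegment ℝ (0 : Fin n → ℝ)
        (∑ j, ((1 + t) * lam j - t * μ j) • expEmbed (α j)) := by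
      refine ⟨t / (1 + t), 1 / (1 + t), div_pos htpos h1t, div_pos one_pos h1t,
        by field_simp; ring, ?_⟩
      rw [smul_zero, zero_add, Finset.smul_sum]
      have hterm : ∀ j, (1 / (1 + t)) • (((1 + t) * lam j - t * μ j) • expEmbed (α j))
          = lam j • expEmbed (α j) - ((t / (1 + t)) * μ j) • expEmbed (α j) := by
        intro j
        rw [smul_smul, ← sub_smul]
        congr 1
        field_simp
      rw [Finset.sum_congr rfl fun j _ => hterm j, Finset.sum_sub_distrib, hlamsum]
      have hμterm : ∑ j, ((t / (1 + t)) * μ j) • expEmbed (α j)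
          = (t / (1 + t)) • ∑ j, μ j • expEmbed (α j) := by
        rw [Finset.smul_sum]
        exact Finset.sum_congr rfl fun j _ => (smul_smul _ _ _).symm
      rw [hμterm, hμ0, smul_zero, sub_zero]
    exact h0G (hGext.2 h0A hyA hβG hseg)

end
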